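/- A crystal is Z3-connected if and only if it admits a proper vertex 3-coloring. -/

import Mathlib

open scoped Classical

/-- A finite loopless multigraph: finite vertex and edge types, each edge has an
unordered pair of distinct endpoints (parallel edges allowed, loops forbidden). -/
structure Multigraph where
  V : Type
  E : Type
  fintypeV : Fintype V
  fintypeE : Fintype E
  ends : E → Sym2 V
  loopless : ∀ e, ¬ (ends e).IsDiag

attribute [instance] Multigraph.fintypeV Multigraph.fintypeE

namespace Multigraph

/-- `D` is an orientation of `G`: each edge is assigned an ordered pair (tail, head)
compatible with its endpoints. -/
def IsOrientation (G : Multigraph) (D : G.E → G.V × G.V) : Prop :=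
  ∀ e, G.ends e = s((D e).1, (D e).2)

/-- Out-degree of `v` under the orientation `D` (tail = first component). -/
noncomputable def outDeg (G : Multigraph) (D : G.E → G.V × G.V) (v : G.V) : ℕ :=
  {e : G.E | (D e).1 = v}.ncard

/-- In-degree of `v` under the orientation `D` (head = second component). -/
noncomputable def inDeg (G : Multigraph) (D : G.E → G.V × G.V) (v : G.V) : ℕ :=
  {e : G.E | (D e).2 = v}.ncard

/-- Flow conservation: at every vertex the sum of `f` over outgoing arcs equals the sum
over incoming arcs. -/
def IsConserving (G : Multigraph) (D : G.E → G.V × G.V) (f : G.E → ℤ) : Prop :=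
  ∀ v : G.V,
    (∑ e : G.E, if (D e).1 = v then f e else 0) =
      ∑ e : G.E, if (D e).2 = v then f e else 0

/-- `G` has a nowhere-zero 3-flow. -/
def HasNZ3Flow (G : Multigraph) : Prop :=
  ∃ (D : G.E → G.V × G.V) (f : G.E → ℤ),
    G.IsOrientation D ∧ (∀ e, 1 ≤ |f e| ∧ |f e| ≤ 2) ∧ G.IsConserving D f

/-- `G` is `Z3`-connected: every `Z3`-boundary is realized by some orientation. -/
def Z3Connected (G : Multigraph) : Prop :=
  ∀ β : G.V → ZMod 3, (∑ v : G.V, β v) = 0 →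
    ∃ D : G.E → G.V × G.V, G.IsOrientation D ∧
      ∀ v : G.V, ((G.outDeg D v : ZMod 3) - (G.inDeg D v : ZMod 3)) = β v

/-- Degree of a vertex: number of edges incident with it. -/
noncomputable def degree (G : Multigraph) (v : G.V) : ℕ :=
  {e : G.E | v ∈ G.ends e}.ncard

/-- `(S, F)` is a triangle-tree subgraph of `G`: start from a triangle and repeatedly
add a new vertex joined to the two endpoints of an existing edge. -/
inductive IsTriangleTree (G : Multigraph) : Set G.V → Set G.E → Prop
  | base (x y z : G.V) (e1 e2 e3 : G.E)
      (hxy : x ≠ y) (hxz : x ≠ z) (hyz : y ≠ z)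
      (h1 : G.ends e1 = s(x, y)) (h2 : G.ends e2 = s(y, z)) (h3 : G.ends e3 = s(x, z)) :
      IsTriangleTree G {x, y, z} {e1, e2, e3}
  | grow (S : Set G.V) (F : Set G.E) (hT : IsTriangleTree G S F)
      (v a b : G.V) (hv : v ∉ S) (e : G.E) (he : e ∈ F) (hab : G.ends e = s(a, b))
      (e1 e2 : G.E) (h1 : G.ends e1 = s(v, a)) (h2 : G.ends e2 = s(v, b)) :
      IsTriangleTree G (insert v S) (insert e1 (insert e2 F))

/-- `G` contains a spanning triangle-tree. -/
def HasSpanningTriangleTree (G : Multigraph) : Prop :=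
  ∃ F : Set G.E, G.IsTriangleTree Set.univ F

/-- Degree of `v` inside the edge set `F`. -/
noncomputable def degIn (G : Multigraph) (F : Set G.E) (v : G.V) : ℕ :=
  {e : G.E | e ∈ F ∧ v ∈ G.ends e}.ncard

/-- `(S, F)` is a triangle-path subgraph: a triangle-tree which is either a single
triangle or has exactly two leaves (vertices of degree 2). -/
def IsTrianglePath (G : Multigraph) (S : Set G.V) (F : Set G.E) : Prop :=
  G.IsTriangleTree S F ∧ (S.ncard = 3 ∨ {v ∈ S | G.degIn F v = 2}.ncard = 2)

/-- `(S, F)` is a subgraph of `G`: endpoints of every chosen edge are chosen vertices. -/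
def Subgraph (G : Multigraph) (S : Set G.V) (F : Set G.E) : Prop :=
  ∀ e ∈ F, ∀ v, v ∈ G.ends e → v ∈ S

/-- `G` is isomorphic to the complete (simple) graph on `n` vertices. -/
def IsCompleteGraphOn (G : Multigraph) (n : ℕ) : Prop :=
  ∃ (φ : G.V ≃ Fin n) (ψ : G.E ≃ {p : Sym2 (Fin n) // ¬ p.IsDiag}),
    ∀ e, Sym2.map (⇑φ) (G.ends e) = (ψ e).1

def IsK3 (G : Multigraph) : Prop := G.IsCompleteGraphOn 3

def IsK4 (G : Multigraph) : Prop := G.IsCompleteGraphOn 4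

/-- `G` is a bull-growing of `H` (equivalently, `H` is the bull-reduction of `G`):
`u, v` are adjacent vertices of degree 3 in `G` with common neighbour `w`, the remaining
neighbours of `u`, `v` are `a`, `b`, and `H = G - u - v + ab` (with a loop deleted when
`a = b`). -/
def IsBullGrowing (G H : Multigraph) : Prop :=
  ∃ (u v w a b : G.V) (euv euw evw eua evb : G.E),
    G.ends euv = s(u, v) ∧ G.ends euw = s(u, w) ∧ G.ends evw = s(v, w) ∧
    G.ends eua = s(u, a) ∧ G.ends evb = s(v, b) ∧
    a ≠ v ∧ b ≠ u ∧
    euv ≠ euw ∧ euv ≠ eua ∧ euw ≠ eua ∧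
    euv ≠ evw ∧ euv ≠ evb ∧ evw ≠ evb ∧
    {e : G.E | u ∈ G.ends e} = {euv, euw, eua} ∧
    {e : G.E | v ∈ G.ends e} = {euv, evw, evb} ∧
    ∃ φ : H.V → G.V, Function.Injective φ ∧
      Set.range φ = {x : G.V | x ≠ u ∧ x ≠ v} ∧
      ((a = b → ∃ ψ : H.E → G.E, Function.Injective ψ ∧
          Set.range ψ = {e : G.E | e ∉ ({euv, euw, evw, eua, evb} : Set G.E)} ∧
          ∀ e, G.ends (ψ e) = Sym2.map φ (H.ends e)) ∧
       (a ≠ b → ∃ (e0 : H.E) (ψ : H.E → G.E),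
          Sym2.map φ (H.ends e0) = s(a, b) ∧
          Set.InjOn ψ {e : H.E | e ≠ e0} ∧
          ψ '' {e : H.E | e ≠ e0} = {e : G.E | e ∉ ({euv, euw, evw, eua, evb} : Set G.E)} ∧
          ∀ e, e ≠ e0 → G.ends (ψ e) = Sym2.map φ (H.ends e)))

/-- `(S, F)` is a triangle (a `K3` subgraph) of `G`. -/
def IsTriangleSub (G : Multigraph) (S : Set G.V) (F : Set G.E) : Prop :=
  ∃ (x y z : G.V) (e1 e2 e3 : G.E),
    x ≠ y ∧ x ≠ z ∧ y ≠ z ∧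
    G.ends e1 = s(x, y) ∧ G.ends e2 = s(y, z) ∧ G.ends e3 = s(x, z) ∧
    S = {x, y, z} ∧ F = {e1, e2, e3}

/-- The subgraph `(S, F)` of `G` is `Z3`-connected (as a graph in its own right). -/
def SubZ3Connected (G : Multigraph) (S : Set G.V) (F : Set G.E) : Prop :=
  ∀ β : G.V → ZMod 3, (∀ v, v ∉ S → β v = 0) → (∑ v : G.V, β v) = 0 →
    ∃ D : G.E → G.V × G.V, G.IsOrientation D ∧
      ∀ v ∈ S, (({e : G.E | e ∈ F ∧ (D e).1 = v}.ncard : ZMod 3)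
        - ({e : G.E | e ∈ F ∧ (D e).2 = v}.ncard : ZMod 3)) = β v

/-- `G` is the 2-sum of its subgraphs `(SA, FA)` and `(SB, FB)`:
`E(G) = E(A) ∪ E(B)`, `|E(A) ∩ E(B)| = 1` and `|V(A) ∩ V(B)| = 2`. -/
def IsTwoSum (G : Multigraph) (SA : Set G.V) (FA : Set G.E)
    (SB : Set G.V) (FB : Set G.E) : Prop :=
  G.Subgraph SA FA ∧ G.Subgraph SB FB ∧
  FA ∪ FB = Set.univ ∧ (FA ∩ FB).ncard = 1 ∧ (SA ∩ SB).ncard = 2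

/-- All vertices of `G` are joined by walks using only edges from `F`. -/
def ConnOn (G : Multigraph) (F : Set G.E) : Prop :=
  ∀ u v : G.V, Relation.ReflTransGen (fun x y => ∃ e ∈ F, G.ends e = s(x, y)) u v

/-- The spanning subgraph with edge set `F` is 2-edge-connected:
connected and with no cut edge. -/
def TwoEdgeConnOn (G : Multigraph) (F : Set G.E) : Prop :=
  G.ConnOn F ∧ ∀ e ∈ F, G.ConnOn (F \ {e})

/-- The orientation `D` is strongly connected. -/
def StronglyConnected (G : Multigraph) (D : G.E → G.V × G.V) : Prop :=
  ∀ u v : G.V, Relation.ReflTransGen (fun x y => ∃ e : G.E, D e = (x, y)) u v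

/-- `G` belongs to the class `S3`: every `Z3`-boundary is realized by a strongly
connected orientation. -/
def InS3 (G : Multigraph) : Prop :=
  ∀ β : G.V → ZMod 3, (∑ v : G.V, β v) = 0 →
    ∃ D : G.E → G.V × G.V, G.IsOrientation D ∧ G.StronglyConnected D ∧
      ∀ v : G.V, ((G.outDeg D v : ZMod 3) - (G.inDeg D v : ZMod 3)) = β v

/-- `G` has a cycle (of length ≥ 2, so possibly a pair of parallel edges) all of whose
edges lie in `A`. -/
def HasCycleIn (G : Multigraph) (A : Set G.E) : Prop :=
  ∃ (vs : List G.V) (es : List G.E),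
    2 ≤ vs.length ∧ vs.Nodup ∧ es.Nodup ∧ es.length = vs.length ∧
    (∀ e ∈ es, e ∈ A) ∧
    ∀ (i : ℕ) (h1 : i < es.length) (h2 : i < vs.length)
      (h3 : (i + 1) % vs.length < vs.length),
      G.ends (es.get ⟨i, h1⟩) = s(vs.get ⟨i, h2⟩, vs.get ⟨(i + 1) % vs.length, h3⟩)

/-- `(vs, es)` is a path from `u` to `v` in `G`. -/
def IsPath (G : Multigraph) (u v : G.V) (vs : List G.V) (es : List G.E) : Prop :=
  vs.Nodup ∧ es.Nodup ∧ vs.head? = some u ∧ vs.getLast? = some v ∧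
  vs.length = es.length + 1 ∧
  ∀ (i : ℕ) (h1 : i < es.length) (h2 : i < vs.length) (h3 : i + 1 < vs.length),
    G.ends (es.get ⟨i, h1⟩) = s(vs.get ⟨i, h2⟩, vs.get ⟨i + 1, h3⟩)

/-- `H` is isomorphic to the subgraph `(S, F)` of `G`. -/
def IsIsoToSub (H G : Multigraph) (S : Set G.V) (F : Set G.E) : Prop :=
  ∃ (φ : H.V → G.V) (ψ : H.E → G.E),
    Function.Injective φ ∧ Set.range φ = S ∧
    Function.Injective ψ ∧ Set.range ψ = F ∧
    ∀ e, G.ends (ψ e) = Sym2.map φ (H.ends e)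

/-- `G'` is (isomorphic to) the graph obtained from `G` by adding two new edges with
endpoint pairs `p` and `q`. -/
def IsAddTwoEdges (G : Multigraph) (p q : Sym2 G.V) (G' : Multigraph) : Prop :=
  ∃ (φ : G.V ≃ G'.V) (e1 e2 : G'.E), e1 ≠ e2 ∧
    G'.ends e1 = Sym2.map (⇑φ) p ∧ G'.ends e2 = Sym2.map (⇑φ) q ∧
    ∃ ψ : G.E → G'.E, Function.Injective ψ ∧
      Set.range ψ = {e : G'.E | e ≠ e1 ∧ e ≠ e2} ∧
      ∀ e, G'.ends (ψ e) = Sym2.map (⇑φ) (G.ends e)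

/-- `G'` is (isomorphic to) the graph obtained from `G` by deleting the edges in `X`
and adding one new edge with endpoint pair `p`. -/
def IsDeleteAddEdge (G : Multigraph) (X : Set G.E) (p : Sym2 G.V) (G' : Multigraph) : Prop :=
  ∃ (φ : G.V ≃ G'.V) (e0 : G'.E),
    G'.ends e0 = Sym2.map (⇑φ) p ∧
    ∃ ψ : {e : G.E // e ∉ X} → G'.E, Function.Injective ψ ∧
      Set.range ψ = {e : G'.E | e ≠ e0} ∧
      ∀ e : {e : G.E // e ∉ X}, G'.ends (ψ e) = Sym2.map (⇑φ) (G.ends e.1)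

/-- `G` is a crystal: a spanning triangle-path plus one extra edge joining its two
leaves. -/
def IsCrystal (G : Multigraph) : Prop :=
  ∃ (F : Set G.E) (u v : G.V) (e0 : G.E),
    G.IsTrianglePath Set.univ F ∧ u ≠ v ∧
    G.degIn F u = 2 ∧ G.degIn F v = 2 ∧
    e0 ∉ F ∧ G.ends e0 = s(u, v) ∧ insert e0 F = Set.univ

/-- The subgraph with edge set `F` is triangularly connected: any two of its edges lie
on a common triangle-path inside it. -/
def TriangularlyConnectedOn (G : Multigraph) (F : Set G.E) : Prop :=
  ∀ e1 ∈ F, ∀ e2 ∈ F, ∃ (S : Set G.V) (F' : Set G.E),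
    F' ⊆ F ∧ G.IsTrianglePath S F' ∧ e1 ∈ F' ∧ e2 ∈ F'

/-- `G` is triangularly connected. -/
def TriangularlyConnected (G : Multigraph) : Prop :=
  G.TriangularlyConnectedOn Set.univ

/-- `G` contains a spanning triangularly-connected subgraph. -/
def HasSpanningTriangularlyConnected (G : Multigraph) : Prop :=
  ∃ F : Set G.E, G.TriangularlyConnectedOn F

/-- `G` admits a circular `t/s`-flow. -/
def HasCircularFlow (G : Multigraph) (t s : ℤ) : Prop :=
  ∃ (D : G.E → G.V × G.V) (f : G.E → ℤ),
    G.IsOrientation D ∧ (∀ e, s ≤ |f e| ∧ |f e| ≤ t - s) ∧ G.IsConserving D f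

end Multigraph

/-- `G` can be obtained from `K4` by a (possibly empty) series of bull-growing
operations. -/
inductive FromK4ByBull : Multigraph → Prop
  | base (G : Multigraph) : G.IsK4 → FromK4ByBull G
  | grow (G H : Multigraph) : FromK4ByBull H → G.IsBullGrowing H → FromK4ByBull G

namespace Stmt5Aux

open Multigraph

variable (G : Multigraph)

/-- difference of indicator functions, valued in `ZMod 3`. -/
noncomputable def dlt (a b : G.V) : G.V → ZMod 3 :=
  fun w => (if a = w then 1 else 0) - (if b = w then 1 else 0)

/-- indicator of a triple of vertices. -/
noncomputable def chi (T : G.V × G.V × G.V) : G.V → ZMod 3 :=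
  fun w => (if T.1 = w then 1 else 0) + (if T.2.1 = w then 1 else 0) +
    (if T.2.2 = w then 1 else 0)

/-- contribution of the oriented edge `f` to the boundary at `w`. -/
noncomputable def contrib (D : G.E → G.V × G.V) (f : G.E) (w : G.V) : ZMod 3 :=
  (if (D f).1 = w then 1 else 0) - (if (D f).2 = w then 1 else 0)

/-- indicator of the edge set `F`. -/
noncomputable def eIn (F : Set G.E) : G.E → ZMod 3 := F.indicator fun _ => 1

/-- boundary of the partial orientation `D` restricted to the edge set `F`. -/
noncomputable def bnd (F : Set G.E) (D : G.E → G.V × G.V) (w : G.V) : ZMod 3 :=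
  ∑ e : G.E, eIn G F e * contrib G D e w

/-- `β` is realizable as the boundary of an orientation on the edge set `F`. -/
def RealZ (F : Set G.E) (β : G.V → ZMod 3) : Prop :=
  ∃ D, G.IsOrientation D ∧ ∀ w, bnd G F D w = β w

/-- exceptional boundaries: `±1`-combinations of the triangle indicators. -/
def IsExc : List (G.V × G.V × G.V) → (G.V → ZMod 3) → Prop
  | [], β => β = fun _ => 0
  | T :: L, β => IsExc L (fun w => β w - chi G T w) ∨ IsExc L (fun w => β w + chi G T w)

/-- span of the triangle indicators. -/
def InSpan : List (G.V × G.V × G.V) → (G.V → ZMod 3) → Prop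
  | [], β => β = fun _ => 0
  | T :: L, β => ∃ t : ZMod 3, InSpan L (fun w => β w - t * chi G T w)

lemma zmod3_cases : ∀ t : ZMod 3, t = 0 ∨ t = 1 ∨ t = 2 := by decide

lemma tri_sum : ∀ x y z : ZMod 3, x ≠ y → y ≠ z → x ≠ z → x + y + z = 0 := by decide

lemma sum_ind (a : G.V) : ∑ w : G.V, (if a = w then (1 : ZMod 3) else 0) = 1 := by
  simp

lemma sum_ind_mul (a : G.V) (c : G.V → ZMod 3) :
    ∑ w : G.V, (if a = w then (1 : ZMod 3) else 0) * c w = c a := by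
  have h : ∀ w, (if a = w then (1 : ZMod 3) else 0) * c w = if a = w then c w else 0 := by
    intro w; split_ifs <;> ring
  rw [Finset.sum_congr rfl fun w _ => h w]
  simp

lemma sum_dlt (a b : G.V) : ∑ w : G.V, dlt G a b w = 0 := by
  unfold dlt
  rw [Finset.sum_sub_distrib, sum_ind, sum_ind]
  ring

lemma sum_dlt_mul (a b : G.V) (c : G.V → ZMod 3) :
    ∑ w : G.V, dlt G a b w * c w = c a - c b := by
  unfold dlt
  have h : ∀ w, ((if a = w then (1:ZMod 3) else 0) - (if b = w then 1 else 0)) * c w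
      = (if a = w then (1:ZMod 3) else 0) * c w - (if b = w then (1:ZMod 3) else 0) * c w := by
    intro w; ring
  rw [Finset.sum_congr rfl fun w _ => h w, Finset.sum_sub_distrib, sum_ind_mul, sum_ind_mul]

lemma sum_chi (T : G.V × G.V × G.V) : ∑ w : G.V, chi G T w = 0 := by
  unfold chi
  rw [Finset.sum_add_distrib, Finset.sum_add_distrib, sum_ind, sum_ind, sum_ind]
  decide

lemma sum_chi_mul (T : G.V × G.V × G.V) (c : G.V → ZMod 3) :
    ∑ w : G.V, chi G T w * c w = c T.1 + c T.2.1 + c T.2.2 := by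
  unfold chi
  have h : ∀ w, ((if T.1 = w then (1:ZMod 3) else 0) + (if T.2.1 = w then 1 else 0) +
      (if T.2.2 = w then 1 else 0)) * c w
      = (if T.1 = w then (1:ZMod 3) else 0) * c w + (if T.2.1 = w then (1:ZMod 3) else 0) * c w
        + (if T.2.2 = w then (1:ZMod 3) else 0) * c w := by
    intro w; ring
  rw [Finset.sum_congr rfl fun w _ => h w, Finset.sum_add_distrib, Finset.sum_add_distrib,
    sum_ind_mul, sum_ind_mul, sum_ind_mul]

lemma isExc_congr {L} {β β' : G.V → ZMod 3} (h : β = β') (hE : IsExc G L β) : IsExc G L β' :=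
  h ▸ hE

lemma isExc_sum : ∀ (L) (β : G.V → ZMod 3), IsExc G L β → ∑ w : G.V, β w = 0
  | [], β, h => by rw [h]; simp
  | T :: L, β, h => by
    rcases h with h | h
    · have h2 := isExc_sum L _ h
      rw [Finset.sum_sub_distrib, sum_chi, sub_zero] at h2
      exact h2
    · have h2 := isExc_sum L _ h
      rw [Finset.sum_add_distrib, sum_chi, add_zero] at h2
      exact h2

lemma isExc_pair (c : G.V → ZMod 3) :
    ∀ (L) (β : G.V → ZMod 3),
      (∀ T ∈ L, c T.1 ≠ c T.2.1 ∧ c T.2.1 ≠ c T.2.2 ∧ c T.1 ≠ c T.2.2) →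
      IsExc G L β → ∑ w : G.V, β w * c w = 0
  | [], β, _, h => by rw [h]; simp
  | T :: L, β, hrb, h => by
    have hT := hrb T (List.mem_cons_self)
    have hchi : ∑ w : G.V, chi G T w * c w = 0 := by
      rw [sum_chi_mul]; exact tri_sum _ _ _ hT.1 hT.2.1 hT.2.2
    have hL : ∀ T' ∈ L, c T'.1 ≠ c T'.2.1 ∧ c T'.2.1 ≠ c T'.2.2 ∧ c T'.1 ≠ c T'.2.2 :=
      fun T' hT' => hrb T' (List.mem_cons_of_mem _ hT')
    rcases h with h | h
    · have h2 := isExc_pair c L _ hL h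
      have h3 : ∀ w, (β w - chi G T w) * c w = β w * c w - chi G T w * c w := by
        intro w; ring
      rw [Finset.sum_congr rfl fun w _ => h3 w, Finset.sum_sub_distrib, hchi, sub_zero] at h2
      exact h2
    · have h2 := isExc_pair c L _ hL h
      have h3 : ∀ w, (β w + chi G T w) * c w = β w * c w + chi G T w * c w := by
        intro w; ring
      rw [Finset.sum_congr rfl fun w _ => h3 w, Finset.sum_add_distrib, hchi, add_zero] at h2
      exact h2

lemma isExc_zero_at : ∀ (L) (β : G.V → ZMod 3) (w : G.V),
      IsExc G L β → (∀ T ∈ L, T.1 ≠ w ∧ T.2.1 ≠ w ∧ T.2.2 ≠ w) → β w = 0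
  | [], β, w, h, _ => by rw [h]
  | T :: L, β, w, h, hw => by
    have hT := hw T (List.mem_cons_self)
    have hchi : chi G T w = 0 := by
      unfold chi; rw [if_neg hT.1, if_neg hT.2.1, if_neg hT.2.2]; ring
    have hL : ∀ T' ∈ L, T'.1 ≠ w ∧ T'.2.1 ≠ w ∧ T'.2.2 ≠ w :=
      fun T' hT' => hw T' (List.mem_cons_of_mem _ hT')
    rcases h with h | h
    · have h2 := isExc_zero_at L _ w h hL
      simp only [hchi, sub_zero] at h2
      exact h2
    · have h2 := isExc_zero_at L _ w h hL
      simp only [hchi, add_zero] at h2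
      exact h2

lemma z3id1 : ∀ p q r : ZMod 3, p + r + q + r = p + (q - 1 * r) := by decide

lemma z3id2 : ∀ p q r : ZMod 3, p - r + q - r = p + (q - 2 * r) := by decide

lemma inSpan_pairexc : ∀ (L) (γ : G.V → ZMod 3), InSpan G L γ →
    ∃ β, IsExc G L β ∧ IsExc G L (fun w => β w + γ w)
  | [], γ, h => ⟨fun _ => 0, rfl, by rw [h]; rfl⟩
  | T :: L, γ, h => by
    obtain ⟨t, ht⟩ := h
    obtain ⟨β', hb1, hb2⟩ := inSpan_pairexc L _ ht
    rcases zmod3_cases t with rfl | rfl | rfl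
    · refine ⟨fun w => β' w + chi G T w, Or.inl ?_, Or.inl ?_⟩
      · exact isExc_congr G (by funext w; ring) hb1
      · exact isExc_congr G (by funext w; ring) hb2
    · refine ⟨fun w => β' w + chi G T w, Or.inl ?_, Or.inr ?_⟩
      · exact isExc_congr G (by funext w; ring) hb1
      · exact isExc_congr G (by funext w; exact (z3id1 (β' w) (γ w) (chi G T w)).symm) hb2
    · refine ⟨fun w => β' w - chi G T w, Or.inr ?_, Or.inl ?_⟩
      · exact isExc_congr G (by funext w; ring) hb1
      · exact isExc_congr G (by funext w; exact (z3id2 (β' w) (γ w) (chi G T w)).symm) hb2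

end Stmt5Aux
namespace Stmt5Aux

open Multigraph

variable (G : Multigraph)

lemma exists_orient (e : G.E) : ∃ p : G.V × G.V, G.ends e = s(p.1, p.2) :=
  ⟨(G.ends e).out, (Quot.out_eq _).symm⟩

noncomputable def dflt : G.E → G.V × G.V := fun e => Classical.choose (exists_orient G e)

lemma dflt_orient : G.IsOrientation (dflt G) := fun e => Classical.choose_spec (exists_orient G e)

lemma tt_mem {S : Set G.V} {F : Set G.E} (h : G.IsTriangleTree S F) :
    ∀ e ∈ F, ∀ x, x ∈ G.ends e → x ∈ S := by
  induction h with
  | base x y z e1 e2 e3 hxy hxz hyz h1 h2 h3 =>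
    intro f hf w hw
    simp only [Set.mem_insert_iff, Set.mem_singleton_iff] at hf
    rcases hf with rfl | rfl | rfl
    · rw [h1, Sym2.mem_iff] at hw
      rcases hw with rfl | rfl <;> simp
    · rw [h2, Sym2.mem_iff] at hw
      rcases hw with rfl | rfl <;> simp
    · rw [h3, Sym2.mem_iff] at hw
      rcases hw with rfl | rfl <;> simp
  | grow S F hT v a b hv e he hab e1 e2 h1 h2 ih =>
    intro f hf w hw
    have hainS : a ∈ S := ih e he a (by rw [hab]; exact Sym2.mem_mk_left a b)
    have hbinS : b ∈ S := ih e he b (by rw [hab]; exact Sym2.mem_mk_right a b)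
    simp only [Set.mem_insert_iff] at hf ⊢
    rcases hf with rfl | rfl | hf
    · rw [h1, Sym2.mem_iff] at hw
      rcases hw with rfl | rfl
      · exact Or.inl rfl
      · exact Or.inr hainS
    · rw [h2, Sym2.mem_iff] at hw
      rcases hw with rfl | rfl
      · exact Or.inl rfl
      · exact Or.inr hbinS
    · exact Or.inr (ih f hf w hw)

lemma third_ne : ∀ x y : ZMod 3, x ≠ y → -(x + y) ≠ x ∧ -(x + y) ≠ y := by decide

lemma proper_edge {c : G.V → ZMod 3} {f : G.E} {α β : G.V}
    (hf : G.ends f = s(α, β)) (hne : c α ≠ c β) :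
    ∀ p q, G.ends f = s(p, q) → c p ≠ c q := by
  intro p q hpq
  have h := hf.symm.trans hpq
  rw [Sym2.eq_iff] at h
  rcases h with ⟨rfl, rfl⟩ | ⟨rfl, rfl⟩
  · exact hne
  · exact hne.symm

lemma exists_col {S : Set G.V} {F : Set G.E} (h : G.IsTriangleTree S F) :
    ∃ c : G.V → ZMod 3, ∀ e ∈ F, ∀ x y, G.ends e = s(x, y) → c x ≠ c y := by
  induction h with
  | base x y z e1 e2 e3 hxy hxz hyz h1 h2 h3 =>
    set c : G.V → ZMod 3 := fun w => if w = x then 0 else if w = y then 1 else 2 with hc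
    have hcx : c x = 0 := by rw [hc]; simp
    have hcy : c y = 1 := by rw [hc]; simp [Ne.symm hxy]
    have hcz : c z = 2 := by rw [hc]; simp [Ne.symm hxz, Ne.symm hyz]
    refine ⟨c, ?_⟩
    intro f hf
    simp only [Set.mem_insert_iff, Set.mem_singleton_iff] at hf
    rcases hf with rfl | rfl | rfl
    · exact proper_edge G h1 (by rw [hcx, hcy]; decide)
    · exact proper_edge G h2 (by rw [hcy, hcz]; decide)
    · exact proper_edge G h3 (by rw [hcx, hcz]; decide)
  | grow S F hT v a b hv e he hab e1 e2 h1 h2 ih =>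
    obtain ⟨c, hc⟩ := ih
    have ha : a ∈ S := tt_mem G hT e he a (by rw [hab]; exact Sym2.mem_mk_left a b)
    have hb : b ∈ S := tt_mem G hT e he b (by rw [hab]; exact Sym2.mem_mk_right a b)
    have hav : a ≠ v := fun h' => hv (h' ▸ ha)
    have hbv : b ≠ v := fun h' => hv (h' ▸ hb)
    have hcab : c a ≠ c b := hc e he a b hab
    set c' : G.V → ZMod 3 := fun w => if w = v then -(c a + c b) else c w with hc'
    have hca : c' a = c a := by rw [hc']; simp [hav]
    have hcb : c' b = c b := by rw [hc']; simp [hbv]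
    have hcv : c' v = -(c a + c b) := by rw [hc']; simp
    refine ⟨c', ?_⟩
    intro f hf
    simp only [Set.mem_insert_iff] at hf
    rcases hf with rfl | rfl | hf
    · exact proper_edge G h1 (by rw [hcv, hca]; exact (third_ne _ _ hcab).1)
    · exact proper_edge G h2 (by rw [hcv, hcb]; exact (third_ne _ _ hcab).2)
    · intro p q hpq
      have hp : p ∈ S := tt_mem G hT f hf p (by rw [hpq]; exact Sym2.mem_mk_left p q)
      have hq : q ∈ S := tt_mem G hT f hf q (by rw [hpq]; exact Sym2.mem_mk_right p q)
      have hpv : p ≠ v := fun h' => hv (h' ▸ hp)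
      have hqv : q ≠ v := fun h' => hv (h' ▸ hq)
      have e1' : c' p = c p := by rw [hc']; simp [hpv]
      have e2' : c' q = c q := by rw [hc']; simp [hqv]
      rw [e1', e2']
      exact hc f hf p q hpq

lemma eIn_mem {F : Set G.E} {e : G.E} (h : e ∈ F) : eIn G F e = 1 :=
  Set.indicator_of_mem h _

lemma eIn_not_mem {F : Set G.E} {e : G.E} (h : e ∉ F) : eIn G F e = 0 :=
  Set.indicator_of_notMem h _

lemma sum_contrib (D : G.E → G.V × G.V) (e : G.E) : ∑ w : G.V, contrib G D e w = 0 := by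
  unfold contrib
  rw [Finset.sum_sub_distrib, sum_ind, sum_ind]
  ring

lemma bnd_congr {F : Set G.E} {D D' : G.E → G.V × G.V} (h : ∀ e ∈ F, D e = D' e) (w : G.V) :
    bnd G F D w = bnd G F D' w := by
  unfold bnd
  apply Finset.sum_congr rfl
  intro e _
  by_cases he : e ∈ F
  · unfold contrib
    rw [h e he]
  · rw [eIn_not_mem G he]
    ring

lemma bnd_empty (D : G.E → G.V × G.V) (w : G.V) : bnd G (∅ : Set G.E) D w = 0 := by
  unfold bnd eIn
  simp

lemma bnd_insert {F : Set G.E} {f : G.E} (hf : f ∉ F) (D : G.E → G.V × G.V) (w : G.V) :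
    bnd G (insert f F) D w = bnd G F D w + contrib G D f w := by
  unfold bnd
  have h1 : ∀ e : G.E, eIn G (insert f F) e * contrib G D e w
      = eIn G F e * contrib G D e w + (if e = f then contrib G D e w else 0) := by
    intro e
    by_cases hef : e = f
    · subst hef
      rw [eIn_mem G (Set.mem_insert _ _), eIn_not_mem G hf, if_pos rfl]
      ring
    · rw [if_neg hef]
      by_cases heF : e ∈ F
      · rw [eIn_mem G (Set.mem_insert_of_mem _ heF), eIn_mem G heF]
        ring
      · rw [eIn_not_mem G heF, eIn_not_mem G (by
          intro hmem
          rcases Set.mem_insert_iff.mp hmem with h' | h'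
          · exact hef h'
          · exact heF h')]
        ring
  rw [Finset.sum_congr rfl fun e _ => h1 e, Finset.sum_add_distrib,
    Finset.sum_ite_eq' Finset.univ f (fun e => contrib G D e w)]
  simp

lemma sum_bnd (F : Set G.E) (D : G.E → G.V × G.V) : ∑ w : G.V, bnd G F D w = 0 := by
  unfold bnd
  rw [Finset.sum_comm]
  apply Finset.sum_eq_zero
  intro e _
  rw [← Finset.mul_sum, sum_contrib]
  ring

lemma bnd_not_mem {F : Set G.E} {D : G.E → G.V × G.V} (hD : G.IsOrientation D) {w : G.V}
    (h : ∀ e ∈ F, w ∉ G.ends e) : bnd G F D w = 0 := by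
  unfold bnd
  apply Finset.sum_eq_zero
  intro e _
  by_cases heF : e ∈ F
  · have hc : contrib G D e w = 0 := by
      unfold contrib
      rw [if_neg, if_neg]
      · ring
      · intro hw
        exact h e heF (by rw [hD e, ← hw]; exact Sym2.mem_mk_right _ _)
      · intro hw
        exact h e heF (by rw [hD e, ← hw]; exact Sym2.mem_mk_left _ _)
    rw [hc]
    ring
  · rw [eIn_not_mem G heF]
    ring

lemma orient_contrib {D : G.E → G.V × G.V} (hD : G.IsOrientation D) {f : G.E} {a b : G.V}
    (hf : G.ends f = s(a, b)) :
    ∃ η : ZMod 3, (η = 1 ∨ η = 2) ∧ ∀ w, contrib G D f w = η * dlt G a b w := by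
  have h := (hD f).symm.trans hf
  rw [Sym2.eq_iff] at h
  rcases h with ⟨ha, hb⟩ | ⟨ha, hb⟩
  · refine ⟨1, Or.inl rfl, fun w => ?_⟩
    unfold contrib dlt
    rw [ha, hb]
    ring
  · refine ⟨2, Or.inr rfl, fun w => ?_⟩
    unfold contrib dlt
    rw [ha, hb]
    split_ifs <;> decide

lemma contrib_eta {D : G.E → G.V × G.V} {f : G.E} {a b : G.V} {η : ZMod 3}
    (hη : η = 1 ∨ η = 2) (hDf : D f = if η = 1 then (a, b) else (b, a)) (w : G.V) :
    contrib G D f w = η * dlt G a b w := by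
  rcases hη with rfl | rfl
  · rw [if_pos rfl] at hDf
    unfold contrib dlt
    rw [hDf]
    ring
  · rw [if_neg (by decide : ¬(2 : ZMod 3) = 1)] at hDf
    unfold contrib dlt
    rw [hDf]
    split_ifs <;> decide

end Stmt5Aux
namespace Stmt5Aux

open Multigraph

variable (G : Multigraph)

lemma dlt_zero {a b w : G.V} (h1 : a ≠ w) (h2 : b ≠ w) : dlt G a b w = 0 := by
  unfold dlt; rw [if_neg h1, if_neg h2]; ring

lemma dlt_fst {a b : G.V} (h : b ≠ a) : dlt G a b a = 1 := by
  unfold dlt; rw [if_pos rfl, if_neg h]; ring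

lemma dlt_snd {a b : G.V} (h : a ≠ b) : dlt G a b b = -1 := by
  unfold dlt; rw [if_neg h, if_pos rfl]; ring

lemma chi_zero {T : G.V × G.V × G.V} {w : G.V} (h1 : T.1 ≠ w) (h2 : T.2.1 ≠ w)
    (h3 : T.2.2 ≠ w) : chi G T w = 0 := by
  unfold chi; rw [if_neg h1, if_neg h2, if_neg h3]; ring

lemma bnd_singleton (f : G.E) (D : G.E → G.V × G.V) (w : G.V) :
    bnd G ({f} : Set G.E) D w = contrib G D f w := by
  rw [show ({f} : Set G.E) = insert f (∅ : Set G.E) by simp,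
    bnd_insert G (Set.notMem_empty f) D w, bnd_empty, zero_add]

lemma base_no1' : ∀ η1 η2 η3 : ZMod 3, ¬((η1 = 1 ∨ η1 = 2) ∧ (η2 = 1 ∨ η2 = 2) ∧
    (η3 = 1 ∨ η3 = 2) ∧ η1 + η3 = 1 ∧ η2 - η1 = 1) := by decide

lemma base_no1 : ∀ η1 η2 η3 : ZMod 3, (η1 = 1 ∨ η1 = 2) → (η2 = 1 ∨ η2 = 2) →
    (η3 = 1 ∨ η3 = 2) → η1 + η3 = 1 → η2 - η1 = 1 → False :=
  fun a b c h1 h2 h3 h4 h5 => base_no1' a b c ⟨h1, h2, h3, h4, h5⟩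

lemma base_no2' : ∀ η1 η2 η3 : ZMod 3, ¬((η1 = 1 ∨ η1 = 2) ∧ (η2 = 1 ∨ η2 = 2) ∧
    (η3 = 1 ∨ η3 = 2) ∧ η1 + η3 = 2 ∧ η2 - η1 = 2) := by decide

lemma base_no2 : ∀ η1 η2 η3 : ZMod 3, (η1 = 1 ∨ η1 = 2) → (η2 = 1 ∨ η2 = 2) →
    (η3 = 1 ∨ η3 = 2) → η1 + η3 = 2 → η2 - η1 = 2 → False :=
  fun a b c h1 h2 h3 h4 h5 => base_no2' a b c ⟨h1, h2, h3, h4, h5⟩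

lemma base_ex : ∀ p q : ZMod 3, ¬(p = 1 ∧ q = 1) → ¬(p = 2 ∧ q = 2) →
    ∃ η1 η2 η3 : ZMod 3, (η1 = 1 ∨ η1 = 2) ∧ (η2 = 1 ∨ η2 = 2) ∧ (η3 = 1 ∨ η3 = 2) ∧
      η1 + η3 = p ∧ η2 - η1 = q := by decide

lemma force11 : ∀ η1 η2 : ZMod 3, (η1 = 1 ∨ η1 = 2) → (η2 = 1 ∨ η2 = 2) → η1 + η2 = 2 →
    η1 = 1 ∧ η2 = 1 := by decide

lemma force22 : ∀ η1 η2 : ZMod 3, (η1 = 1 ∨ η1 = 2) → (η2 = 1 ∨ η2 = 2) → η1 + η2 = 1 →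
    η1 = 2 ∧ η2 = 2 := by decide

lemma idA : ∀ p i j k : ZMod 3, p - 1 * (i - j) - 1 * (i - k) = p + (j + k + i) := by decide

lemma idB : ∀ p i j k : ZMod 3, p - 2 * (i - j) - 2 * (i - k) = p - (j + k + i) := by decide

theorem main_lemma {S : Set G.V} {F : Set G.E} (h : G.IsTriangleTree S F) :
    ∃ L : List (G.V × G.V × G.V),
      (∀ T ∈ L, T.1 ∈ S ∧ T.2.1 ∈ S ∧ T.2.2 ∈ S) ∧
      (∀ c : G.V → ZMod 3, (∀ e ∈ F, ∀ x y, G.ends e = s(x, y) → c x ≠ c y) →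
        ∀ T ∈ L, c T.1 ≠ c T.2.1 ∧ c T.2.1 ≠ c T.2.2 ∧ c T.1 ≠ c T.2.2) ∧
      (∀ β : G.V → ZMod 3, (∀ w, w ∉ S → β w = 0) → ∑ w : G.V, β w = 0 →
        (RealZ G F β ↔ ¬ IsExc G L β)) ∧
      (∀ c : G.V → ZMod 3, (∀ e ∈ F, ∀ x y, G.ends e = s(x, y) → c x ≠ c y) →
        ∀ γ : G.V → ZMod 3, (∀ w, w ∉ S → γ w = 0) → ∑ w : G.V, γ w = 0 →
          (∑ w : G.V, γ w * c w) = 0 → InSpan G L γ) := by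
  induction h with
  | base x y z e1 e2 e3 hxy hxz hyz h1 h2 h3 =>
    -- distinctness of the three edges
    have hd12 : e1 ≠ e2 := by
      intro h'
      have := (h' ▸ h1).symm.trans h2
      rw [Sym2.eq_iff] at this
      rcases this with ⟨h'', _⟩ | ⟨h'', _⟩
      · exact hxy h''
      · exact hxz h''
    have hd13 : e1 ≠ e3 := by
      intro h'
      have := (h' ▸ h1).symm.trans h3
      rw [Sym2.eq_iff] at this
      rcases this with ⟨_, h''⟩ | ⟨h'', _⟩
      · exact hyz h''
      · exact hxz h''
    have hd23 : e2 ≠ e3 := by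
      intro h'
      have := (h' ▸ h2).symm.trans h3
      rw [Sym2.eq_iff] at this
      rcases this with ⟨h'', _⟩ | ⟨h'', _⟩
      · exact hxy h''.symm
      · exact hyz h''
    have hmem1 : e1 ∉ insert e2 ({e3} : Set G.E) := by simp [hd12, hd13]
    have hmem2 : e2 ∉ ({e3} : Set G.E) := by simp [hd23]
    have hbnd3 : ∀ (D : G.E → G.V × G.V) (w : G.V),
        bnd G ({e1, e2, e3} : Set G.E) D w
          = contrib G D e1 w + contrib G D e2 w + contrib G D e3 w := by
      intro D w
      rw [show ({e1, e2, e3} : Set G.E) = insert e1 (insert e2 {e3}) from rfl,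
        bnd_insert G hmem1 D w, bnd_insert G hmem2 D w, bnd_singleton]
      ring
    -- dlt values
    have dxy_x : dlt G x y x = 1 := dlt_fst G (Ne.symm hxy)
    have dxy_y : dlt G x y y = -1 := dlt_snd G hxy
    have dxy_z : dlt G x y z = 0 := dlt_zero G hxz hyz
    have dyz_x : dlt G y z x = 0 := dlt_zero G (Ne.symm hxy) (Ne.symm hxz)
    have dyz_y : dlt G y z y = 1 := dlt_fst G (Ne.symm hyz)
    have dyz_z : dlt G y z z = -1 := dlt_snd G hyz
    have dxz_x : dlt G x z x = 1 := dlt_fst G (Ne.symm hxz)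
    have dxz_y : dlt G x z y = 0 := dlt_zero G hxy (Ne.symm hyz)
    have dxz_z : dlt G x z z = -1 := dlt_snd G hxz
    have hchix : chi G (x, y, z) x = 1 := by
      unfold chi; rw [if_pos rfl, if_neg (Ne.symm hxy), if_neg (Ne.symm hxz)]; ring
    have hchiy : chi G (x, y, z) y = 1 := by
      unfold chi; rw [if_neg hxy, if_pos rfl, if_neg (Ne.symm hyz)]; ring
    have hchiz : chi G (x, y, z) z = 1 := by
      unfold chi; rw [if_neg hxz, if_neg hyz, if_pos rfl]; ring
    refine ⟨[(x, y, z)], ?_, ?_, ?_, ?_⟩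
    · intro T hT
      rcases List.mem_singleton.mp hT with rfl
      exact ⟨by simp, by simp, by simp⟩
    · intro c hc T hT
      rcases List.mem_singleton.mp hT with rfl
      exact ⟨hc e1 (by simp) x y h1, hc e2 (by simp) y z h2, hc e3 (by simp) x z h3⟩
    · intro β hsupp hsum
      have hsum3 : β x + β y + β z = 0 := by
        rw [← hsum]
        symm
        rw [← Finset.sum_subset (Finset.subset_univ ({x, y, z} : Finset G.V))
          (fun w _ hw => hsupp w (by
            intro hmem
            apply hw
            simp only [Set.mem_insert_iff, Set.mem_singleton_iff] at hmem
            simp [hmem]))]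
        rw [Finset.sum_insert (by simp [hxy, hxz]), Finset.sum_insert (by simp [hyz]),
          Finset.sum_singleton]
        ring
      have hz' : β z = -β x - β y := by linear_combination hsum3
      constructor
      · rintro ⟨D, hD, hbnd⟩ hexc
        obtain ⟨η1, hη1, k1⟩ := orient_contrib G hD h1
        obtain ⟨η2, hη2, k2⟩ := orient_contrib G hD h2
        obtain ⟨η3, hη3, k3⟩ := orient_contrib G hD h3
        have hβ : ∀ w, β w = η1 * dlt G x y w + η2 * dlt G y z w + η3 * dlt G x z w := by
          intro w
          rw [← hbnd w, hbnd3 D w, k1 w, k2 w, k3 w]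
        have hbx : β x = η1 + η3 := by rw [hβ x, dxy_x, dyz_x, dxz_x]; ring
        have hby : β y = η2 - η1 := by rw [hβ y, dxy_y, dyz_y, dxz_y]; ring
        rcases hexc with hE | hE
        · have hE : (fun w => β w - chi G (x, y, z) w) = fun _ => 0 := hE
          · have hx1 : β x = 1 := by
              have := congrFun hE x
              rw [hchix] at this
              rwa [sub_eq_zero] at this
            have hy1 : β y = 1 := by
              have := congrFun hE y
              rw [hchiy] at this
              rwa [sub_eq_zero] at this
            exact base_no1 η1 η2 η3 hη1 hη2 hη3 (by rw [← hbx, hx1])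
              (by rw [← hby, hy1])
        · have hE : (fun w => β w + chi G (x, y, z) w) = fun _ => 0 := hE
          · have hx2 : β x = 2 := by
              have := congrFun hE x
              rw [hchix] at this
              have h' : β x = -1 := by linear_combination this
              rw [h']; decide
            have hy2 : β y = 2 := by
              have := congrFun hE y
              rw [hchiy] at this
              have h' : β y = -1 := by linear_combination this
              rw [h']; decide
            exact base_no2 η1 η2 η3 hη1 hη2 hη3 (by rw [← hbx, hx2])
              (by rw [← hby, hy2])
      · intro hexc
        have hne1 : ¬(β x = 1 ∧ β y = 1) := by
          rintro ⟨ha1, hb1⟩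
          apply hexc
          refine Or.inl (funext fun w => ?_)
          by_cases hwx : x = w
          · subst hwx; rw [hchix, ha1]; decide
          · by_cases hwy : y = w
            · subst hwy; rw [hchiy, hb1]; decide
            · by_cases hwz : z = w
              · subst hwz; rw [hchiz, hz', ha1, hb1]; decide
              · rw [hsupp w (by
                    simp only [Set.mem_insert_iff, Set.mem_singleton_iff]
                    push_neg
                    exact ⟨fun h' => hwx h'.symm, fun h' => hwy h'.symm,
                      fun h' => hwz h'.symm⟩),
                  chi_zero G hwx hwy hwz]
                decide
        have hne2 : ¬(β x = 2 ∧ β y = 2) := by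
          rintro ⟨ha1, hb1⟩
          apply hexc
          refine Or.inr (funext fun w => ?_)
          by_cases hwx : x = w
          · subst hwx; rw [hchix, ha1]; decide
          · by_cases hwy : y = w
            · subst hwy; rw [hchiy, hb1]; decide
            · by_cases hwz : z = w
              · subst hwz; rw [hchiz, hz', ha1, hb1]; decide
              · rw [hsupp w (by
                    simp only [Set.mem_insert_iff, Set.mem_singleton_iff]
                    push_neg
                    exact ⟨fun h' => hwx h'.symm, fun h' => hwy h'.symm,
                      fun h' => hwz h'.symm⟩),
                  chi_zero G hwx hwy hwz]
                decide
        obtain ⟨η1, η2, η3, hη1, hη2, hη3, hbx, hby⟩ := base_ex (β x) (β y) hne1 hne2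
        have hbz : -η2 - η3 = β z := by rw [hz', ← hbx, ← hby]; ring
        refine ⟨fun f => if f = e1 then (if η1 = 1 then (x, y) else (y, x))
          else if f = e2 then (if η2 = 1 then (y, z) else (z, y))
          else if f = e3 then (if η3 = 1 then (x, z) else (z, x))
          else dflt G f, ?_, ?_⟩
        · intro f
          beta_reduce
          by_cases hf1 : f = e1
          · subst hf1
            rw [if_pos rfl]
            rcases hη1 with h' | h'
            · rw [h', if_pos rfl]; exact h1
            · rw [h', if_neg (by decide)]; rw [h1]; exact Sym2.eq_swap
          · by_cases hf2 : f = e2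
            · subst hf2
              rw [if_neg hf1, if_pos rfl]
              rcases hη2 with h' | h'
              · rw [h', if_pos rfl]; exact h2
              · rw [h', if_neg (by decide)]; rw [h2]; exact Sym2.eq_swap
            · by_cases hf3 : f = e3
              · subst hf3
                rw [if_neg hf1, if_neg hf2, if_pos rfl]
                rcases hη3 with h' | h'
                · rw [h', if_pos rfl]; exact h3
                · rw [h', if_neg (by decide)]; rw [h3]; exact Sym2.eq_swap
              · rw [if_neg hf1, if_neg hf2, if_neg hf3]
                exact dflt_orient G f
        · intro w
          rw [hbnd3]
          have hD1 : contrib G (fun f => if f = e1 then (if η1 = 1 then (x, y) else (y, x))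
              else if f = e2 then (if η2 = 1 then (y, z) else (z, y))
              else if f = e3 then (if η3 = 1 then (x, z) else (z, x))
              else dflt G f) e1 w = η1 * dlt G x y w :=
            contrib_eta G hη1 (by beta_reduce; rw [if_pos rfl]) w
          have hD2 : contrib G (fun f => if f = e1 then (if η1 = 1 then (x, y) else (y, x))
              else if f = e2 then (if η2 = 1 then (y, z) else (z, y))
              else if f = e3 then (if η3 = 1 then (x, z) else (z, x))
              else dflt G f) e2 w = η2 * dlt G y z w :=
            contrib_eta G hη2 (by beta_reduce; rw [if_neg (Ne.symm hd12), if_pos rfl]) w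
          have hD3 : contrib G (fun f => if f = e1 then (if η1 = 1 then (x, y) else (y, x))
              else if f = e2 then (if η2 = 1 then (y, z) else (z, y))
              else if f = e3 then (if η3 = 1 then (x, z) else (z, x))
              else dflt G f) e3 w = η3 * dlt G x z w :=
            contrib_eta G hη3 (by beta_reduce; rw [if_neg (Ne.symm hd13), if_neg (Ne.symm hd23),
              if_pos rfl]) w
          rw [hD1, hD2, hD3]
          by_cases hwx : x = w
          · subst hwx
            rw [dxy_x, dyz_x, dxz_x, ← hbx]; ring
          · by_cases hwy : y = w
            · subst hwy
              rw [dxy_y, dyz_y, dxz_y, ← hby]; ring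
            · by_cases hwz : z = w
              · subst hwz
                rw [dxy_z, dyz_z, dxz_z, ← hbz]; ring
              · rw [dlt_zero G hwx hwy, dlt_zero G hwy hwz, dlt_zero G hwx hwz,
                  hsupp w (by
                    simp only [Set.mem_insert_iff, Set.mem_singleton_iff]
                    push_neg
                    exact ⟨fun h' => hwx h'.symm, fun h' => hwy h'.symm,
                      fun h' => hwz h'.symm⟩)]
                ring
    · intro c hc γ hsupp hsum hpair
      have hcx : c x ≠ c y := hc e1 (by simp) x y h1
      have hcy : c y ≠ c z := hc e2 (by simp) y z h2
      have hcz : c x ≠ c z := hc e3 (by simp) x z h3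
      -- γ is supported on {x,y,z}, sums to 0, and pairs to 0 with c; show γ = γ x • χ
      have hsum3 : γ x + γ y + γ z = 0 := by
        rw [← hsum]
        symm
        rw [← Finset.sum_subset (Finset.subset_univ ({x, y, z} : Finset G.V))
          (fun w _ hw => hsupp w (by
            intro hmem
            apply hw
            simp only [Set.mem_insert_iff, Set.mem_singleton_iff] at hmem
            simp [hmem]))]
        rw [Finset.sum_insert (by simp [hxy, hxz]), Finset.sum_insert (by simp [hyz]),
          Finset.sum_singleton]
        ring
      have hpair3 : γ x * c x + γ y * c y + γ z * c z = 0 := by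
        rw [← hpair]
        symm
        rw [← Finset.sum_subset (Finset.subset_univ ({x, y, z} : Finset G.V))
          (fun w _ hw => by
            rw [hsupp w (by
              intro hmem
              apply hw
              simp only [Set.mem_insert_iff, Set.mem_singleton_iff] at hmem
              simp [hmem])]
            ring)]
        rw [Finset.sum_insert (by simp [hxy, hxz]), Finset.sum_insert (by simp [hyz]),
          Finset.sum_singleton]
        ring
      have heq : γ x = γ y ∧ γ x = γ z := by
        have key : ∀ p q r u v' w' : ZMod 3, u ≠ v' → v' ≠ w' → u ≠ w' →
            p + q + r = 0 → p * u + q * v' + r * w' = 0 → p = q ∧ p = r := by decide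
        exact key (γ x) (γ y) (γ z) (c x) (c y) (c z) hcx hcy hcz hsum3 hpair3
      refine ⟨γ x, ?_⟩
      show InSpan G [] _
      show (fun w => γ w - γ x * chi G (x, y, z) w) = fun _ => 0
      funext w
      by_cases hwx : x = w
      · subst hwx; rw [hchix]; ring
      · by_cases hwy : y = w
        · subst hwy; rw [hchiy, ← heq.1]; ring
        · by_cases hwz : z = w
          · subst hwz; rw [hchiz, ← heq.2]; ring
          · rw [chi_zero G hwx hwy hwz, hsupp w (by
              simp only [Set.mem_insert_iff, Set.mem_singleton_iff]
              push_neg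
              exact ⟨fun h' => hwx h'.symm, fun h' => hwy h'.symm,
                fun h' => hwz h'.symm⟩)]
            ring
  | grow S F hT v a b hv e he hab e1 e2 h1 h2 ih =>
    obtain ⟨L, hLS, hLrb, hMain, hSpan⟩ := ih
    have ha : a ∈ S := tt_mem G hT e he a (by rw [hab]; exact Sym2.mem_mk_left a b)
    have hb : b ∈ S := tt_mem G hT e he b (by rw [hab]; exact Sym2.mem_mk_right a b)
    have hav : a ≠ v := fun h' => hv (h' ▸ ha)
    have hbv : b ≠ v := fun h' => hv (h' ▸ hb)
    have hab' : a ≠ b := by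
      intro h'
      exact G.loopless e (by rw [hab, h']; exact Sym2.mk_isDiag_iff.mpr rfl)
    have he1F : e1 ∉ F := fun hm =>
      hv (tt_mem G hT e1 hm v (by rw [h1]; exact Sym2.mem_mk_left v a))
    have he2F : e2 ∉ F := fun hm =>
      hv (tt_mem G hT e2 hm v (by rw [h2]; exact Sym2.mem_mk_left v b))
    have he12 : e1 ≠ e2 := by
      intro h'
      have h'' := (h' ▸ h1).symm.trans h2
      rw [Sym2.eq_iff] at h''
      rcases h'' with ⟨_, h''⟩ | ⟨h'', _⟩
      · exact hab' h''
      · exact hbv h''.symm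
    have he1F' : e1 ∉ insert e2 F := by
      intro hm
      rcases Set.mem_insert_iff.mp hm with h' | h'
      · exact he12 h'
      · exact he1F h'
    have dva_v : dlt G v a v = 1 := dlt_fst G hav
    have dvb_v : dlt G v b v = 1 := dlt_fst G hbv
    have chiT_v : chi G (a, b, v) v = 1 := by
      unfold chi; rw [if_neg hav, if_neg hbv, if_pos rfl]; ring
    have hvL : ∀ T' ∈ L, T'.1 ≠ v ∧ T'.2.1 ≠ v ∧ T'.2.2 ≠ v := by
      intro T' hT'
      obtain ⟨q1, q2, q3⟩ := hLS T' hT'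
      exact ⟨fun h' => hv (h' ▸ q1), fun h' => hv (h' ▸ q2), fun h' => hv (h' ▸ q3)⟩
    have hchi_zero' : ∀ w, w ∉ insert v S → chi G (a, b, v) w = 0 := by
      intro w hw
      refine chi_zero G ?_ ?_ ?_
      · exact fun h' => hw (Set.mem_insert_of_mem _ (h' ▸ ha))
      · exact fun h' => hw (Set.mem_insert_of_mem _ (h' ▸ hb))
      · exact fun h' => hw (h' ▸ Set.mem_insert _ _)
    -- Step A: transfer of realizability across the growth step
    have hstep : ∀ β : G.V → ZMod 3,
        RealZ G (insert e1 (insert e2 F)) β ↔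
          ∃ η1 η2 : ZMod 3, (η1 = 1 ∨ η1 = 2) ∧ (η2 = 1 ∨ η2 = 2) ∧ η1 + η2 = β v ∧
            RealZ G F (fun w => β w - η1 * dlt G v a w - η2 * dlt G v b w) := by
      intro β
      constructor
      · rintro ⟨D, hD, hbnd⟩
        obtain ⟨η1, hη1, k1⟩ := orient_contrib G hD h1
        obtain ⟨η2, hη2, k2⟩ := orient_contrib G hD h2
        have hb' : ∀ w, bnd G F D w = β w - η1 * dlt G v a w - η2 * dlt G v b w := by
          intro w
          have hw := hbnd w
          rw [bnd_insert G he1F' D w, bnd_insert G he2F D w, k1 w, k2 w] at hw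
          linear_combination hw
        have h0 : bnd G F D v = 0 :=
          bnd_not_mem G hD (fun f hf hmem => hv (tt_mem G hT f hf v hmem))
        have hsv : η1 + η2 = β v := by
          have h'' := hb' v
          rw [h0, dva_v, dvb_v] at h''
          linear_combination h''
        exact ⟨η1, η2, hη1, hη2, hsv, D, hD, hb'⟩
      · rintro ⟨η1, η2, hη1, hη2, hsv, D0, hD0, hb0⟩
        refine ⟨fun f => if f = e1 then (if η1 = 1 then (v, a) else (a, v))
          else if f = e2 then (if η2 = 1 then (v, b) else (b, v)) else D0 f, ?_, ?_⟩
        · intro f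
          beta_reduce
          by_cases hf1 : f = e1
          · subst hf1
            rw [if_pos rfl]
            rcases hη1 with h' | h'
            · rw [h', if_pos rfl]; exact h1
            · rw [h', if_neg (by decide)]; rw [h1]; exact Sym2.eq_swap
          · by_cases hf2 : f = e2
            · subst hf2
              rw [if_neg hf1, if_pos rfl]
              rcases hη2 with h' | h'
              · rw [h', if_pos rfl]; exact h2
              · rw [h', if_neg (by decide)]; rw [h2]; exact Sym2.eq_swap
            · rw [if_neg hf1, if_neg hf2]
              exact hD0 f
        · intro w
          rw [bnd_insert G he1F' _ w, bnd_insert G he2F _ w]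
          have hC1 : contrib G (fun f => if f = e1 then (if η1 = 1 then (v, a) else (a, v))
              else if f = e2 then (if η2 = 1 then (v, b) else (b, v)) else D0 f) e1 w
                = η1 * dlt G v a w :=
            contrib_eta G hη1 (by beta_reduce; rw [if_pos rfl]) w
          have hC2 : contrib G (fun f => if f = e1 then (if η1 = 1 then (v, a) else (a, v))
              else if f = e2 then (if η2 = 1 then (v, b) else (b, v)) else D0 f) e2 w
                = η2 * dlt G v b w :=
            contrib_eta G hη2 (by beta_reduce; rw [if_neg (Ne.symm he12), if_pos rfl]) w
          have hBF : bnd G F (fun f => if f = e1 then (if η1 = 1 then (v, a) else (a, v))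
              else if f = e2 then (if η2 = 1 then (v, b) else (b, v)) else D0 f) w
                = bnd G F D0 w := by
            refine bnd_congr G (fun f hf => ?_) w
            beta_reduce
            rw [if_neg (fun h' : f = e1 => he1F (h' ▸ hf)), if_neg (fun h' : f = e2 => he2F (h' ▸ hf))]
          rw [hC1, hC2, hBF, hb0 w]
          ring
    refine ⟨(a, b, v) :: L, ?_, ?_, ?_, ?_⟩
    · intro T' hT'
      rcases List.mem_cons.mp hT' with rfl | hm
      · exact ⟨Set.mem_insert_of_mem _ ha, Set.mem_insert_of_mem _ hb, Set.mem_insert _ _⟩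
      · obtain ⟨q1, q2, q3⟩ := hLS T' hm
        exact ⟨Set.mem_insert_of_mem _ q1, Set.mem_insert_of_mem _ q2,
          Set.mem_insert_of_mem _ q3⟩
    · intro c hc T' hT'
      have hcF : ∀ f ∈ F, ∀ x y, G.ends f = s(x, y) → c x ≠ c y :=
        fun f hf => hc f (Set.mem_insert_of_mem _ (Set.mem_insert_of_mem _ hf))
      rcases List.mem_cons.mp hT' with rfl | hm
      · exact ⟨hcF e he a b hab,
          (hc e2 (Set.mem_insert_of_mem _ (Set.mem_insert _ _)) v b h2).symm,
          (hc e1 (Set.mem_insert _ _) v a h1).symm⟩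
      · exact hLrb c hcF T' hm
    · intro β hsupp hsum
      rw [hstep β]
      have hnotins : ∀ w, w ∉ S → w ≠ v → w ∉ insert v S := by
        intro w hw hwv hm
        rcases Set.mem_insert_iff.mp hm with h' | h'
        · exact hwv h'
        · exact hw h'
      have hshift_supp : ∀ η1 η2 : ZMod 3, η1 + η2 = β v →
          ∀ w, w ∉ S → β w - η1 * dlt G v a w - η2 * dlt G v b w = 0 := by
        intro η1 η2 hs w hw
        by_cases hwv : w = v
        · subst hwv
          rw [dva_v, dvb_v, ← hs]; ring
        · rw [hsupp w (hnotins w hw hwv),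
            dlt_zero G (fun h' => hwv h'.symm) (fun h' => hw (h' ▸ ha)),
            dlt_zero G (fun h' => hwv h'.symm) (fun h' => hw (h' ▸ hb))]
          ring
      have hshift_sum : ∀ η1 η2 : ZMod 3,
          ∑ w : G.V, (β w - η1 * dlt G v a w - η2 * dlt G v b w) = 0 := by
        intro η1 η2
        rw [Finset.sum_sub_distrib, Finset.sum_sub_distrib, ← Finset.mul_sum,
          ← Finset.mul_sum, sum_dlt, sum_dlt, hsum]
        ring
      have hsumM : ∑ w : G.V, (β w - chi G (a, b, v) w) = 0 := by
        rw [Finset.sum_sub_distrib, sum_chi, hsum]; ring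
      have hsumP : ∑ w : G.V, (β w + chi G (a, b, v) w) = 0 := by
        rw [Finset.sum_add_distrib, sum_chi, hsum]; ring
      rcases zmod3_cases (β v) with hv0 | hv1 | hv2
      · -- β v = 0 : both exceptional shifts are impossible; one realization exists
        constructor
        · rintro ⟨η1, η2, hη1, hη2, hs, hR⟩ hexc
          have hexc' : IsExc G L (fun w => β w - chi G (a, b, v) w) ∨
              IsExc G L (fun w => β w + chi G (a, b, v) w) := hexc
          rcases hexc' with hE | hE
          · have h'' := isExc_zero_at G L _ v hE hvL
            rw [chiT_v, hv0] at h''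
            exact absurd h'' (by decide)
          · have h'' := isExc_zero_at G L _ v hE hvL
            rw [chiT_v, hv0] at h''
            exact absurd h'' (by decide)
        · intro _
          obtain ⟨c', hc'⟩ := exists_col G hT
          have hrb := hLrb c' hc'
          by_cases hE1 : IsExc G L (fun w => β w - 1 * dlt G v a w - 2 * dlt G v b w)
          · refine ⟨2, 1, Or.inr rfl, Or.inl rfl, by rw [hv0]; decide, ?_⟩
            refine (hMain _ (hshift_supp 2 1 (by rw [hv0]; decide)) (hshift_sum 2 1)).mpr ?_
            intro hE2
            have p1 := isExc_pair G c' L _ hrb hE1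
            have p2 := isExc_pair G c' L _ hrb hE2
            have key : c' a = c' b := by
              have q1 : ∑ w : G.V, ((β w - 1 * dlt G v a w - 2 * dlt G v b w) * c' w -
                  (β w - 2 * dlt G v a w - 1 * dlt G v b w) * c' w) = 0 := by
                rw [Finset.sum_sub_distrib, p1, p2]; ring
              have q2 : ∀ w, (β w - 1 * dlt G v a w - 2 * dlt G v b w) * c' w -
                  (β w - 2 * dlt G v a w - 1 * dlt G v b w) * c' w
                    = dlt G v a w * c' w - dlt G v b w * c' w := by
                intro w; ring
              rw [Finset.sum_congr rfl fun w _ => q2 w, Finset.sum_sub_distrib,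
                sum_dlt_mul, sum_dlt_mul] at q1
              linear_combination -q1
            exact hc' e he a b hab key
          · refine ⟨1, 2, Or.inl rfl, Or.inr rfl, by rw [hv0]; decide, ?_⟩
            exact (hMain _ (hshift_supp 1 2 (by rw [hv0]; decide)) (hshift_sum 1 2)).mpr hE1
      · -- β v = 1 : forced (2,2), shift is β - χ
        have hfe : (fun w => β w - 2 * dlt G v a w - 2 * dlt G v b w)
            = fun w => β w - chi G (a, b, v) w := by
          funext w
          unfold dlt chi
          exact idB (β w) (if v = w then 1 else 0) (if a = w then 1 else 0)
            (if b = w then 1 else 0)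
        have hsuppM : ∀ w, w ∉ S → β w - chi G (a, b, v) w = 0 := by
          intro w hw
          by_cases hwv : w = v
          · subst hwv; rw [chiT_v, hv1]; decide
          · rw [hsupp w (hnotins w hw hwv), hchi_zero' w (hnotins w hw hwv)]; ring
        constructor
        · rintro ⟨η1, η2, hη1, hη2, hs, hR⟩ hexc
          rw [hv1] at hs
          obtain ⟨rfl, rfl⟩ := force22 η1 η2 hη1 hη2 hs
          have hexc' : IsExc G L (fun w => β w - chi G (a, b, v) w) ∨
              IsExc G L (fun w => β w + chi G (a, b, v) w) := hexc
          rcases hexc' with hE | hE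
          · rw [hfe] at hR
            exact (hMain _ hsuppM hsumM).mp hR hE
          · have h'' := isExc_zero_at G L _ v hE hvL
            rw [chiT_v, hv1] at h''
            exact absurd h'' (by decide)
        · intro hnexc
          refine ⟨2, 2, Or.inr rfl, Or.inr rfl, by rw [hv1]; decide, ?_⟩
          rw [hfe]
          refine (hMain _ hsuppM hsumM).mpr ?_
          intro hE
          exact hnexc (show IsExc G ((a, b, v) :: L) β from Or.inl hE)
      · -- β v = 2 : forced (1,1), shift is β + χ
        have hfe : (fun w => β w - 1 * dlt G v a w - 1 * dlt G v b w)
            = fun w => β w + chi G (a, b, v) w := by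
          funext w
          unfold dlt chi
          exact idA (β w) (if v = w then 1 else 0) (if a = w then 1 else 0)
            (if b = w then 1 else 0)
        have hsuppP : ∀ w, w ∉ S → β w + chi G (a, b, v) w = 0 := by
          intro w hw
          by_cases hwv : w = v
          · subst hwv; rw [chiT_v, hv2]; decide
          · rw [hsupp w (hnotins w hw hwv), hchi_zero' w (hnotins w hw hwv)]; ring
        constructor
        · rintro ⟨η1, η2, hη1, hη2, hs, hR⟩ hexc
          rw [hv2] at hs
          obtain ⟨rfl, rfl⟩ := force11 η1 η2 hη1 hη2 hs
          have hexc' : IsExc G L (fun w => β w - chi G (a, b, v) w) ∨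
              IsExc G L (fun w => β w + chi G (a, b, v) w) := hexc
          rcases hexc' with hE | hE
          · have h'' := isExc_zero_at G L _ v hE hvL
            rw [chiT_v, hv2] at h''
            exact absurd h'' (by decide)
          · rw [hfe] at hR
            exact (hMain _ hsuppP hsumP).mp hR hE
        · intro hnexc
          refine ⟨1, 1, Or.inl rfl, Or.inl rfl, by rw [hv2]; decide, ?_⟩
          rw [hfe]
          refine (hMain _ hsuppP hsumP).mpr ?_
          intro hE
          exact hnexc (show IsExc G ((a, b, v) :: L) β from Or.inr hE)
    · intro c hc γ hsupp hsum hpair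
      have hcF : ∀ f ∈ F, ∀ x y, G.ends f = s(x, y) → c x ≠ c y :=
        fun f hf => hc f (Set.mem_insert_of_mem _ (Set.mem_insert_of_mem _ hf))
      have hcab : c a ≠ c b := hcF e he a b hab
      have hcva : c v ≠ c a := hc e1 (Set.mem_insert _ _) v a h1
      have hcvb : c v ≠ c b := hc e2 (Set.mem_insert_of_mem _ (Set.mem_insert _ _)) v b h2
      have habc : c a + c b + c v = 0 := tri_sum _ _ _ hcab hcvb.symm hcva.symm
      have hnotins : ∀ w, w ∉ S → w ≠ v → w ∉ insert v S := by
        intro w hw hwv hm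
        rcases Set.mem_insert_iff.mp hm with h' | h'
        · exact hwv h'
        · exact hw h'
      show ∃ t : ZMod 3, InSpan G L (fun w => γ w - t * chi G (a, b, v) w)
      refine ⟨γ v, hSpan c hcF _ ?_ ?_ ?_⟩
      · intro w hw
        by_cases hwv : w = v
        · subst hwv; rw [chiT_v]; ring
        · rw [hsupp w (hnotins w hw hwv), hchi_zero' w (hnotins w hw hwv)]; ring
      · rw [Finset.sum_sub_distrib, ← Finset.mul_sum, sum_chi, hsum]; ring
      · have hpt : ∀ w, (γ w - γ v * chi G (a, b, v) w) * c w
            = γ w * c w - γ v * (chi G (a, b, v) w * c w) := by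
          intro w; ring
        rw [Finset.sum_congr rfl fun w _ => hpt w, Finset.sum_sub_distrib, ← Finset.mul_sum,
          sum_chi_mul, hpair]
        show 0 - γ v * (c a + c b + c v) = 0
        rw [habc]
        ring

end Stmt5Aux
namespace Stmt5Aux

open Multigraph

variable (G : Multigraph)

lemma ncard_cast (P : G.E → Prop) :
    (({e : G.E | P e}.ncard : ZMod 3)) = ∑ e : G.E, if P e then (1 : ZMod 3) else 0 := by
  rw [Set.ncard_eq_toFinset_card', Set.toFinset_setOf, Finset.card_filter]
  push_cast
  apply Finset.sum_congr rfl
  intro e _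
  split_ifs <;> simp

lemma deg_bnd (D : G.E → G.V × G.V) (w : G.V) :
    ((G.outDeg D w : ZMod 3) - (G.inDeg D w : ZMod 3)) = bnd G Set.univ D w := by
  unfold Multigraph.outDeg Multigraph.inDeg bnd
  have c1 := ncard_cast G (fun e => (D e).1 = w)
  have c2 := ncard_cast G (fun e => (D e).2 = w)
  beta_reduce at c1 c2
  rw [c1, c2]
  have h1 : ∀ e : G.E, eIn G Set.univ e * contrib G D e w
      = (if (D e).1 = w then (1 : ZMod 3) else 0) - (if (D e).2 = w then 1 else 0) := by
    intro e
    rw [show eIn G Set.univ e = 1 from Set.indicator_of_mem (Set.mem_univ e) _]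
    unfold contrib
    ring
  rw [Finset.sum_congr rfl fun e _ => h1 e, Finset.sum_sub_distrib]

end Stmt5Aux

open Stmt5Aux
/-- A crystal is `Z3`-connected iff it admits a proper vertex
3-coloring. -/
theorem stmt_5 (G : Multigraph) (hG : G.IsCrystal) :
    G.Z3Connected ↔
      ∃ c : G.V → Fin 3, ∀ (e : G.E) (x y : G.V), G.ends e = s(x, y) → c x ≠ c y := by
  obtain ⟨F, u, v, e0, hTP, huv, hdu, hdv, he0F, hends0, hins⟩ := hG
  obtain ⟨L, hLS, hLrb, hMain, hSpan⟩ := main_lemma G hTP.1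
  have huniv : (Set.univ : Set G.E) = insert e0 F := hins.symm
  constructor
  · intro hZ3
    obtain ⟨c0, hc0⟩ := exists_col G hTP.1
    by_cases hcc : c0 u = c0 v
    · exfalso
      have hγ : InSpan G L (dlt G v u) := by
        refine hSpan c0 hc0 _ (fun w hw => absurd (Set.mem_univ w) hw) (sum_dlt G v u) ?_
        rw [sum_dlt_mul, hcc]
        ring
      obtain ⟨β1, hB1, hB2⟩ := inSpan_pairexc G L _ hγ
      have hsumβ : ∑ w : G.V, (β1 w - dlt G v u w) = 0 := by
        rw [Finset.sum_sub_distrib, isExc_sum G L β1 hB1, sum_dlt]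
        ring
      obtain ⟨D, hD, hval⟩ := hZ3 (fun w => β1 w - dlt G v u w) hsumβ
      have hbndv : ∀ w, bnd G Set.univ D w = β1 w - dlt G v u w := by
        intro w
        rw [← deg_bnd G D w]
        exact hval w
      obtain ⟨η0, hη0, k0⟩ := orient_contrib G hD hends0
      have hR : RealZ G F (fun w => β1 w - dlt G v u w - η0 * dlt G u v w) := by
        refine ⟨D, hD, fun w => ?_⟩
        have hw := hbndv w
        rw [huniv, bnd_insert G he0F D w, k0 w] at hw
        linear_combination hw
      have hdlt_neg : ∀ w, dlt G u v w = - dlt G v u w := by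
        intro w
        unfold dlt
        ring
      rcases hη0 with rfl | rfl
      · have hfe : (fun w => β1 w - dlt G v u w - 1 * dlt G u v w) = β1 := by
          funext w
          rw [hdlt_neg w]
          ring
        rw [hfe] at hR
        exact (hMain β1 (fun w hw => absurd (Set.mem_univ w) hw)
          (isExc_sum G L β1 hB1)).mp hR hB1
      · have hfe : (fun w => β1 w - dlt G v u w - 2 * dlt G u v w)
            = fun w => β1 w + dlt G v u w := by
          funext w
          rw [hdlt_neg w]
          ring
        rw [hfe] at hR
        exact (hMain _ (fun w hw => absurd (Set.mem_univ w) hw)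
          (isExc_sum G L _ hB2)).mp hR hB2
    · refine ⟨fun w => ⟨(c0 w).val, ZMod.val_lt _⟩, ?_⟩
      intro f x y hxy hcontra
      have hval' : c0 x = c0 y := by
        have h' := congrArg Fin.val hcontra
        exact ZMod.val_injective 3 h'
      have hf : f ∈ insert e0 F := by
        rw [← huniv]
        exact Set.mem_univ f
      rcases Set.mem_insert_iff.mp hf with rfl | hfF
      · exact proper_edge G hends0 hcc x y hxy hval'
      · exact hc0 f hfF x y hxy hval'
  · rintro ⟨c, hc⟩
    have hc1inj : ∀ x y : G.V, (((c x).val : ZMod 3)) = ((c y).val : ZMod 3) → c x = c y := by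
      intro x y hxy
      have hx : (((c x).val : ZMod 3)).val = (c x).val := ZMod.val_cast_of_lt (c x).isLt
      have hy : (((c y).val : ZMod 3)).val = (c y).val := ZMod.val_cast_of_lt (c y).isLt
      exact Fin.ext ((hx.symm.trans (congrArg ZMod.val hxy)).trans hy)
    have hc1 : ∀ f ∈ F, ∀ x y, G.ends f = s(x, y) →
        (((c x).val : ZMod 3)) ≠ ((c y).val : ZMod 3) :=
      fun f hf x y hxy hcontra => hc f x y hxy (hc1inj x y hcontra)
    have hc1uv : (((c u).val : ZMod 3)) ≠ ((c v).val : ZMod 3) :=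
      fun hcontra => hc e0 u v hends0 (hc1inj u v hcontra)
    set c1 : G.V → ZMod 3 := fun w => ((c w).val : ZMod 3) with hc1def
    intro β hsum
    have hpairdiff : IsExc G L (fun w => β w - 1 * dlt G u v w) →
        IsExc G L (fun w => β w - 2 * dlt G u v w) → False := by
      intro hA hB
      have p1 := isExc_pair G c1 L _ (hLrb c1 hc1) hA
      have p2 := isExc_pair G c1 L _ (hLrb c1 hc1) hB
      have q1 : ∑ w : G.V, ((β w - 1 * dlt G u v w) * c1 w
          - (β w - 2 * dlt G u v w) * c1 w) = 0 := by
        rw [Finset.sum_sub_distrib, p1, p2]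
        ring
      have q2 : ∀ w, (β w - 1 * dlt G u v w) * c1 w - (β w - 2 * dlt G u v w) * c1 w
          = dlt G u v w * c1 w := by
        intro w
        ring
      rw [Finset.sum_congr rfl fun w _ => q2 w, sum_dlt_mul] at q1
      exact hc1uv (by linear_combination q1)
    have build : ∀ η0 : ZMod 3, (η0 = 1 ∨ η0 = 2) →
        ¬ IsExc G L (fun w => β w - η0 * dlt G u v w) →
        ∃ D : G.E → G.V × G.V, G.IsOrientation D ∧
          ∀ w : G.V, ((G.outDeg D w : ZMod 3) - (G.inDeg D w : ZMod 3)) = β w := by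
      intro η0 hη0 hnE
      have hsupp' : ∀ w, w ∉ (Set.univ : Set G.V) → β w - η0 * dlt G u v w = 0 :=
        fun w hw => absurd (Set.mem_univ w) hw
      have hsum' : ∑ w : G.V, (β w - η0 * dlt G u v w) = 0 := by
        rw [Finset.sum_sub_distrib, ← Finset.mul_sum, sum_dlt, hsum]
        ring
      obtain ⟨D0, hD0, hb0⟩ := (hMain _ hsupp' hsum').mpr hnE
      refine ⟨fun f => if f = e0 then (if η0 = 1 then (u, v) else (v, u)) else D0 f, ?_, ?_⟩
      · intro f
        beta_reduce
        by_cases hf : f = e0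
        · subst hf
          rw [if_pos rfl]
          rcases hη0 with h' | h'
          · rw [h', if_pos rfl]
            exact hends0
          · rw [h', if_neg (by decide)]
            rw [hends0]
            exact Sym2.eq_swap
        · rw [if_neg hf]
          exact hD0 f
      · intro w
        rw [deg_bnd G _ w, huniv, bnd_insert G he0F _ w]
        have hC : contrib G (fun f => if f = e0 then (if η0 = 1 then (u, v) else (v, u))
            else D0 f) e0 w = η0 * dlt G u v w :=
          contrib_eta G hη0 (by beta_reduce; rw [if_pos rfl]) w
        have hBF : bnd G F (fun f => if f = e0 then (if η0 = 1 then (u, v) else (v, u))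
            else D0 f) w = bnd G F D0 w := by
          refine bnd_congr G (fun f hf => ?_) w
          beta_reduce
          rw [if_neg (fun h' : f = e0 => he0F (h' ▸ hf))]
        rw [hC, hBF, hb0 w]
        ring
    by_cases hE : IsExc G L (fun w => β w - 1 * dlt G u v w)
    · exact build 2 (Or.inr rfl) (fun hB => hpairdiff hE hB)
    · exact build 1 (Or.inl rfl) hE
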